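/- If a symmetric matrix Λ ∈ ℝ^{(k+1)×(k+1)} is positive semidefinite with a one-dimensional kernel spanned by the vector v = (θ, 1), then the unique ϑ satisfying ϑ ⪰ 0, ϑ_{k+1,k+1} = 1, and ⟨Λ, ϑ⟩ = 0 is ϑ = vvᵀ. -/

import Mathlib

open Matrix

/-- If a symmetric PSD matrix `Λ` has one-dimensional kernel spanned by
`v = (θ, 1)`, then the unique `ϑ` with `ϑ ⪰ 0`, bottom-right entry 1, and
`⟨Λ, ϑ⟩ = trace(Λϑ) = 0` is `ϑ = vvᵀ`. -/
lemma aux_trace_zero {n : Type*} [Fintype n] {m : Type*} [Fintype m]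
    (M : Matrix m n ℝ) (h : (Mᴴ * M).trace = 0) : M = 0 := by
  have key : ∀ j ∈ Finset.univ, (0:ℝ) ≤ (Mᴴ * M) j j := by
    intro j _
    simp only [Matrix.mul_apply, Matrix.conjTranspose_apply, star_trivial]
    exact Finset.sum_nonneg fun i _ => mul_self_nonneg _
  rw [Matrix.trace] at h
  have hz := (Finset.sum_eq_zero_iff_of_nonneg key).mp h
  ext i j
  have := hz j (Finset.mem_univ j)
  simp only [Matrix.diag_apply, Matrix.mul_apply, Matrix.conjTranspose_apply, star_trivial] at this
  have h2 : ∀ l ∈ Finset.univ, (0:ℝ) ≤ M l j * M l j := fun l _ => mul_self_nonneg _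
  have := (Finset.sum_eq_zero_iff_of_nonneg h2).mp this i (Finset.mem_univ i)
  simpa using mul_self_eq_zero.mp this

theorem psd_complementarity_unique_solution
    {k : ℕ}
    (Λ : Matrix (Fin k ⊕ Unit) (Fin k ⊕ Unit) ℝ)
    (hΛ : Λ.PosSemidef)
    (θ : Fin k → ℝ)
    (hker : ∀ x : Fin k ⊕ Unit → ℝ, Λ.mulVec x = 0 ↔
      ∃ t : ℝ, x = t • Sum.elim θ (fun _ => 1))
    (ϑ : Matrix (Fin k ⊕ Unit) (Fin k ⊕ Unit) ℝ)
    (hϑ : ϑ.PosSemidef)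
    (hcorner : ϑ (Sum.inr ()) (Sum.inr ()) = 1)
    (htr : (Λ * ϑ).trace = 0) :
    ϑ = Matrix.vecMulVec (Sum.elim θ (fun _ => 1)) (Sum.elim θ (fun _ => 1)) := by
  set v : Fin k ⊕ Unit → ℝ := Sum.elim θ (fun _ => 1) with hv
  obtain ⟨B, hB⟩ : ∃ B : Matrix (Fin k ⊕ Unit) (Fin k ⊕ Unit) ℝ, ϑ = Bᴴ * B := by
    open scoped MatrixOrder in exact CStarAlgebra.nonneg_iff_eq_star_mul_self.mp hϑ.nonneg
  obtain ⟨C, hC⟩ : ∃ C : Matrix (Fin k ⊕ Unit) (Fin k ⊕ Unit) ℝ, Λ = Cᴴ * C := by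
    open scoped MatrixOrder in exact CStarAlgebra.nonneg_iff_eq_star_mul_self.mp hΛ.nonneg
  -- trace(Λϑ) = trace((CBᴴ)ᴴ (CBᴴ))
  have htr2 : ((C * Bᴴ)ᴴ * (C * Bᴴ)).trace = 0 := by
    have e : (C * Bᴴ)ᴴ * (C * Bᴴ) = B * Λ * Bᴴ := by
      rw [hC, Matrix.conjTranspose_mul, Matrix.conjTranspose_conjTranspose]
      simp only [Matrix.mul_assoc]
    rw [e, Matrix.trace_mul_cycle, Matrix.trace_mul_comm, ← hB, htr]
  have hCB : C * Bᴴ = 0 := aux_trace_zero _ htr2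
  have hΛB : Λ * Bᴴ = 0 := by
    rw [hC, Matrix.mul_assoc, hCB, Matrix.mul_zero]
  -- each row of B lies in the kernel
  have hrows : ∀ l, ∃ t : ℝ, B l = t • v := by
    intro l
    rw [← hker]
    ext i
    have : (Λ * Bᴴ) i l = 0 := by rw [hΛB]; rfl
    simpa [Matrix.mul_apply, Matrix.mulVec, dotProduct,
      Matrix.conjTranspose_apply] using this
  choose t ht using hrows
  have hϑ_eq : ∀ i j, ϑ i j = (∑ l, t l ^ 2) * (v i * v j) := by
    intro i j
    rw [hB]
    simp only [Matrix.mul_apply, Matrix.conjTranspose_apply, star_trivial]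
    rw [Finset.sum_mul]
    apply Finset.sum_congr rfl
    intro l _
    have hi := congrFun (ht l) i
    have hj := congrFun (ht l) j
    simp only [Pi.smul_apply, smul_eq_mul] at hi hj
    rw [hi, hj]; ring
  have hsum : (∑ l, t l ^ 2) = 1 := by
    have := hϑ_eq (Sum.inr ()) (Sum.inr ())
    rw [hcorner] at this
    simpa [hv] using this.symm
  ext i j
  rw [hϑ_eq, hsum, Matrix.vecMulVec_apply, one_mul]
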